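/- Let S ⊆ Z^n be an integrally convex set admitting a dec-min element. Then for any two dec-min elements x, y of S, the L∞-distance satisfies ‖x − y‖_∞ ≤ 1. -/

import Mathlib

open Finset

/-- Descending rearrangement of a tuple. -/
noncomputable def sortDesc {n : ℕ} {α : Type*} [LinearOrder α] (x : Fin n → α) : Fin n → α :=
  x ∘ (Tuple.sort (fun i => OrderDual.toDual (x i)))

/-- `x <_dec y` : strict lexicographic comparison of descending rearrangements. -/
noncomputable def decLT {n : ℕ} {α : Type*} [LinearOrder α] (x y : Fin n → α) : Prop :=
  ∃ i : Fin n, (∀ j : Fin n, j < i → sortDesc x j = sortDesc y j) ∧ sortDesc x i < sortDesc y i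

/-- `x ≤_dec y` : lexicographic comparison of descending rearrangements. -/
noncomputable def decLE {n : ℕ} {α : Type*} [LinearOrder α] (x y : Fin n → α) : Prop :=
  sortDesc x = sortDesc y ∨ decLT x y

/-- `x` is a decreasingly minimal (dec-min) element of `S`. -/
noncomputable def DecMin {n : ℕ} (S : Set (Fin n → ℤ)) (x : Fin n → ℤ) : Prop :=
  x ∈ S ∧ ∀ y ∈ S, decLE x y

/-- Embedding of integer vectors into real vectors. -/
def castVec {n : ℕ} (z : Fin n → ℤ) : Fin n → ℝ := fun i => (z i : ℝ)

/-- `S ⊆ ℤⁿ` is an integrally convex set: every point of `conv S` lies in the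
convex hull of the points of `S` in its integral neighborhood. -/
def IntConvexSet {n : ℕ} (S : Set (Fin n → ℤ)) : Prop :=
  S.Nonempty ∧ ∀ x : Fin n → ℝ,
    x ∈ convexHull ℝ (castVec '' S) →
    x ∈ convexHull ℝ (castVec '' {z ∈ S | ∀ i, |x i - (z i : ℝ)| < 1})

/-! ### Auxiliary lemmas -/

section Aux

lemma sortDesc_anti {n : ℕ} (x : Fin n → ℤ) {i j : Fin n} (h : i ≤ j) :
    sortDesc x j ≤ sortDesc x i :=
  Tuple.monotone_sort (fun i => OrderDual.toDual (x i)) h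

lemma sum_sortDesc {n : ℕ} (φ : ℤ → ℝ) (x : Fin n → ℤ) :
    ∑ i, φ (sortDesc x i) = ∑ i, φ (x i) :=
  Equiv.sum_comp (Tuple.sort fun i => OrderDual.toDual (x i)) (fun i => φ (x i))

lemma decLT_asymm {n : ℕ} {x y : Fin n → ℤ} (h1 : decLT x y) (h2 : decLT y x) : False := by
  obtain ⟨i, hpi, hi⟩ := h1
  obtain ⟨i', hpi', hi'⟩ := h2
  rcases lt_trichotomy i i' with h | h | h
  · rw [hpi' i h] at hi; exact lt_irrefl _ hi
  · subst h; exact absurd hi (not_lt.2 hi'.le)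
  · rw [hpi i' h] at hi'; exact lt_irrefl _ hi'

/-- The rapidly growing convex weight function. -/
noncomputable def Fw (c : ℝ) (L t : ℤ) : ℝ := c ^ (t - L).toNat

lemma Fw_pos {c : ℝ} (hc : 0 < c) (L t : ℤ) : 0 < Fw c L t := pow_pos hc _

lemma Fw_mono {c : ℝ} (hc : 1 ≤ c) (L : ℤ) {s t : ℤ} (h : s ≤ t) : Fw c L s ≤ Fw c L t :=
  pow_le_pow_right₀ hc (by omega)

lemma Fw_succ (c : ℝ) {L t : ℤ} (h : L ≤ t) : Fw c L (t + 1) = c * Fw c L t := by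
  unfold Fw
  have h' : (t + 1 - L).toNat = (t - L).toNat + 1 := by omega
  rw [h', pow_succ]; ring

lemma bern_lt (c : ℝ) (hc : 2 ≤ c) (k : ℕ) (hk : 2 ≤ k) : 1 + (k : ℝ) * (c - 1) < c ^ k := by
  induction k, hk using Nat.le_induction with
  | base =>
    push_cast
    nlinarith [sq_nonneg (c - 1), sq_nonneg (c - 2)]
  | succ k hk ih =>
    have hck : (0 : ℝ) < c ^ k := pow_pos (by linarith) k
    have h2 : (1 + (k : ℝ) * (c - 1)) * c < c ^ k * c :=
      mul_lt_mul_of_pos_right ih (by linarith)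
    rw [pow_succ]
    push_cast
    nlinarith [mul_nonneg (show (0:ℝ) ≤ (k:ℝ) from Nat.cast_nonneg k) (sq_nonneg (c - 1))]

lemma chord_le (c : ℝ) (hc : 2 ≤ c) (L a s : ℤ) (ha : L ≤ a) (hs : L ≤ s) :
    Fw c L a + ((s : ℝ) - (a : ℝ)) * (Fw c L (a + 1) - Fw c L a) ≤ Fw c L s := by
  have hc0 : (0 : ℝ) < c := by linarith
  have hFa : 0 < Fw c L a := Fw_pos hc0 _ _
  have hFs : 0 < Fw c L s := Fw_pos hc0 _ _
  have hstep : Fw c L (a + 1) - Fw c L a = Fw c L a * (c - 1) := by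
    rw [Fw_succ c ha]; ring
  rw [hstep]
  rcases le_or_gt s a with h | h
  · rcases eq_or_lt_of_le h with rfl | h
    · simp
    · have h1 : (s : ℝ) - a ≤ -1 := by
        have : (s : ℝ) ≤ (a : ℝ) - 1 := by exact_mod_cast (by omega : s ≤ a - 1)
        linarith
      have hX : 0 ≤ Fw c L a * (c - 1) := by nlinarith
      nlinarith [mul_le_mul_of_nonneg_right h1 hX]
  · set k := (s - a).toNat with hkdef
    have hk' : ((k : ℤ)) = s - a := Int.toNat_of_nonneg (by omega)
    have hks : (s : ℝ) - a = (k : ℝ) := by exact_mod_cast (congrArg (Int.cast : ℤ → ℝ) hk').symm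
    have hFsk : Fw c L s = Fw c L a * c ^ k := by
      unfold Fw; rw [← pow_add]; congr 1; omega
    rw [hFsk, hks]
    have hb := one_add_mul_le_pow (show (-2 : ℝ) ≤ c - 1 by linarith) k
    have hb' : 1 + (k : ℝ) * (c - 1) ≤ c ^ k := by
      have : (1 : ℝ) + (c - 1) = c := by ring
      rwa [this] at hb
    nlinarith

lemma chord_lt (c : ℝ) (hc : 2 ≤ c) (L a s : ℤ) (ha : L ≤ a) (hs : L ≤ s)
    (hstrict : s + 1 ≤ a ∨ a + 2 ≤ s) :
    Fw c L a + ((s : ℝ) - (a : ℝ)) * (Fw c L (a + 1) - Fw c L a) < Fw c L s := by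
  have hc0 : (0 : ℝ) < c := by linarith
  have hFa : 0 < Fw c L a := Fw_pos hc0 _ _
  have hFs : 0 < Fw c L s := Fw_pos hc0 _ _
  have hstep : Fw c L (a + 1) - Fw c L a = Fw c L a * (c - 1) := by
    rw [Fw_succ c ha]; ring
  rw [hstep]
  rcases hstrict with h | h
  · have h1 : (s : ℝ) - a ≤ -1 := by
      have : (s : ℝ) ≤ (a : ℝ) - 1 := by exact_mod_cast (by omega : s ≤ a - 1)
      linarith
    have hX : 0 ≤ Fw c L a * (c - 1) := by nlinarith
    nlinarith [mul_le_mul_of_nonneg_right h1 hX]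
  · set k := (s - a).toNat with hkdef
    have hk' : ((k : ℤ)) = s - a := Int.toNat_of_nonneg (by omega)
    have hks : (s : ℝ) - a = (k : ℝ) := by exact_mod_cast (congrArg (Int.cast : ℤ → ℝ) hk').symm
    have hFsk : Fw c L s = Fw c L a * c ^ k := by
      unfold Fw; rw [← pow_add]; congr 1; omega
    have hk2 : 2 ≤ k := by omega
    rw [hFsk, hks]
    have hb := bern_lt c hc k hk2
    nlinarith

lemma sum_eq_affine {ι : Type} (t : Finset ι) (w : ι → ℝ) (ζ : ι → ℤ) (a : ℤ)
    (hrange : ∀ k ∈ t, a ≤ ζ k ∧ ζ k ≤ a + 1)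
    (hw1 : ∑ k ∈ t, w k = 1) (G : ℤ → ℝ) (M : ℝ)
    (hsum : ∑ k ∈ t, w k * (ζ k : ℝ) = M) :
    ∑ k ∈ t, w k * G (ζ k) = G a + (M - a) * (G (a + 1) - G a) := by
  have key : ∀ k ∈ t, w k * G (ζ k)
      = w k * G a + (w k * (ζ k : ℝ) - w k * (a : ℝ)) * (G (a + 1) - G a) := by
    intro k hk
    rcases hrange k hk with ⟨h1, h2⟩
    have : ζ k = a ∨ ζ k = a + 1 := by omega
    rcases this with h | h <;> rw [h] <;> push_cast <;> ring
  rw [Finset.sum_congr rfl key, Finset.sum_add_distrib]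
  have e1 : ∑ k ∈ t, w k * G a = G a := by rw [← Finset.sum_mul, hw1, one_mul]
  have e2 : ∑ k ∈ t, (w k * (ζ k : ℝ) - w k * (a : ℝ)) * (G (a + 1) - G a)
      = (M - a) * (G (a + 1) - G a) := by
    rw [← Finset.sum_mul]
    congr 1
    rw [Finset.sum_sub_distrib, hsum, ← Finset.sum_mul, hw1, one_mul]
  rw [e1, e2]

lemma coord_le (c : ℝ) (hc : 2 ≤ c) (L X Y : ℤ) (hX : L ≤ X) (hY : L ≤ Y)
    {ι : Type} (t : Finset ι) (w : ι → ℝ) (ζ : ι → ℤ)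
    (hw1 : ∑ k ∈ t, w k = 1)
    (hζ : ∀ k ∈ t, |2 * ζ k - X - Y| ≤ 1)
    (hsum : ∑ k ∈ t, w k * (ζ k : ℝ) = ((X : ℝ) + Y) / 2) :
    ∑ k ∈ t, w k * Fw c L (ζ k) ≤ (Fw c L X + Fw c L Y) / 2 := by
  obtain ⟨a, ha1, ha2⟩ : ∃ a : ℤ, 2 * a ≤ X + Y ∧ X + Y ≤ 2 * a + 1 := ⟨(X + Y) / 2, by omega⟩
  have haL : L ≤ a := by omega
  have hrange : ∀ k ∈ t, a ≤ ζ k ∧ ζ k ≤ a + 1 := by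
    intro k hk; have := abs_le.mp (hζ k hk); omega
  rw [sum_eq_affine t w ζ a hrange hw1 (Fw c L) _ hsum]
  have hcX := chord_le c hc L a X haL hX
  have hcY := chord_le c hc L a Y haL hY
  linarith

lemma coord_lt (c : ℝ) (hc : 2 ≤ c) (L X Y : ℤ) (hX : L ≤ X) (hY : L ≤ Y)
    (hd : X + 2 ≤ Y ∨ Y + 2 ≤ X)
    {ι : Type} (t : Finset ι) (w : ι → ℝ) (ζ : ι → ℤ)
    (hw1 : ∑ k ∈ t, w k = 1)
    (hζ : ∀ k ∈ t, |2 * ζ k - X - Y| ≤ 1)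
    (hsum : ∑ k ∈ t, w k * (ζ k : ℝ) = ((X : ℝ) + Y) / 2) :
    ∑ k ∈ t, w k * Fw c L (ζ k) < (Fw c L X + Fw c L Y) / 2 := by
  obtain ⟨a, ha1, ha2⟩ : ∃ a : ℤ, 2 * a ≤ X + Y ∧ X + Y ≤ 2 * a + 1 := ⟨(X + Y) / 2, by omega⟩
  have haL : L ≤ a := by omega
  have hrange : ∀ k ∈ t, a ≤ ζ k ∧ ζ k ≤ a + 1 := by
    intro k hk; have := abs_le.mp (hζ k hk); omega
  rw [sum_eq_affine t w ζ a hrange hw1 (Fw c L) _ hsum]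
  rcases hd with hd | hd
  · rcases (by omega : a + 2 ≤ Y ∨ X + 1 ≤ a) with h | h
    · have h1 := chord_lt c hc L a Y haL hY (Or.inr h)
      have h2 := chord_le c hc L a X haL hX
      linarith
    · have h1 := chord_lt c hc L a X haL hX (Or.inl h)
      have h2 := chord_le c hc L a Y haL hY
      linarith
  · rcases (by omega : a + 2 ≤ X ∨ Y + 1 ≤ a) with h | h
    · have h1 := chord_lt c hc L a X haL hX (Or.inr h)
      have h2 := chord_le c hc L a Y haL hY
      linarith
    · have h1 := chord_lt c hc L a Y haL hY (Or.inl h)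
      have h2 := chord_le c hc L a X haL hX
      linarith

lemma Phi_le {n : ℕ} (c : ℝ) (hcn : (n : ℝ) + 1 ≤ c) (hc2 : 2 ≤ c) (L : ℤ)
    (x z : Fin n → ℤ) (hxL : ∀ i, L ≤ x i) (hzL : ∀ i, L ≤ z i)
    (h : decLE x z) : ∑ i, Fw c L (x i) ≤ ∑ i, Fw c L (z i) := by
  classical
  have hc1 : (1 : ℝ) ≤ c := by linarith
  have hc0 : (0 : ℝ) < c := by linarith
  rw [← sum_sortDesc (Fw c L) x, ← sum_sortDesc (Fw c L) z]
  have hsx : ∀ i, L ≤ sortDesc x i := fun i => hxL _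
  have hsz : ∀ i, L ≤ sortDesc z i := fun i => hzL _
  rcases h with heq | ⟨k, hpre, hk⟩
  · rw [heq]
  · rw [← Finset.sum_filter_add_sum_filter_not Finset.univ (fun i => i < k)
      (fun i => Fw c L (sortDesc x i)),
      ← Finset.sum_filter_add_sum_filter_not Finset.univ (fun i => i < k)
      (fun i => Fw c L (sortDesc z i))]
    have e1 : ∑ i ∈ univ.filter (fun i => i < k), Fw c L (sortDesc x i)
        = ∑ i ∈ univ.filter (fun i => i < k), Fw c L (sortDesc z i) :=
      Finset.sum_congr rfl fun i hi => by
        rw [hpre i (by simpa using (Finset.mem_filter.mp hi).2)]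
    rw [e1]
    refine add_le_add le_rfl ?_
    set k1 := sortDesc z k - 1 with hk1
    have hk1L : L ≤ k1 := by have := hsx k; omega
    have hterm : ∀ i ∈ univ.filter (fun i => ¬ i < k), Fw c L (sortDesc x i) ≤ Fw c L k1 := by
      intro i hi
      have hki : k ≤ i := by simpa using (Finset.mem_filter.mp hi).2
      have := sortDesc_anti x hki
      exact Fw_mono hc1 L (by omega)
    have hsum1 : ∑ i ∈ univ.filter (fun i => ¬ i < k), Fw c L (sortDesc x i)
        ≤ ((univ.filter (fun i : Fin n => ¬ i < k)).card : ℝ) * Fw c L k1 := by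
      calc ∑ i ∈ univ.filter (fun i => ¬ i < k), Fw c L (sortDesc x i)
          ≤ ∑ _i ∈ univ.filter (fun i : Fin n => ¬ i < k), Fw c L k1 :=
            Finset.sum_le_sum hterm
        _ = _ := by rw [Finset.sum_const, nsmul_eq_mul]
    have hcard : ((univ.filter (fun i : Fin n => ¬ i < k)).card : ℝ) ≤ (n : ℝ) := by
      have h1 : (univ.filter (fun i : Fin n => ¬ i < k)).card ≤ n := by
        calc (univ.filter (fun i : Fin n => ¬ i < k)).card
            ≤ (univ : Finset (Fin n)).card := Finset.card_filter_le _ _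
          _ = n := by simp
      exact_mod_cast h1
    have hFk1 : 0 < Fw c L k1 := Fw_pos hc0 L k1
    have hstep : Fw c L (sortDesc z k) = c * Fw c L k1 := by
      have h' : k1 + 1 = sortDesc z k := by omega
      rw [← h', Fw_succ c hk1L]
    have hsingle : Fw c L (sortDesc z k)
        ≤ ∑ i ∈ univ.filter (fun i => ¬ i < k), Fw c L (sortDesc z i) := by
      refine Finset.single_le_sum (f := fun i => Fw c L (sortDesc z i))
        (fun i _ => (Fw_pos hc0 L _).le) ?_
      simp
    have hp1 : ((univ.filter (fun i : Fin n => ¬ i < k)).card : ℝ) * Fw c L k1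
        ≤ (n : ℝ) * Fw c L k1 := mul_le_mul_of_nonneg_right hcard hFk1.le
    have hp2 : (n : ℝ) * Fw c L k1 ≤ (c - 1) * Fw c L k1 :=
      mul_le_mul_of_nonneg_right (by linarith) hFk1.le
    linarith

end Aux

theorem decmin_linf_diameter_le_one (n : ℕ) (S : Set (Fin n → ℤ))
    (hS : IntConvexSet S) (hdm : ∃ w, DecMin S w)
    (x y : Fin n → ℤ) (hx : DecMin S x) (hy : DecMin S y) :
    ∀ i, |x i - y i| ≤ 1 := by
  classical
  intro j
  by_contra hcon
  have h1 : 1 < |x j - y j| := not_le.mp hcon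
  have hd : x j + 2 ≤ y j ∨ y j + 2 ≤ x j := by
    rcases abs_cases (x j - y j) with ⟨he, h0⟩ | ⟨he, h0⟩ <;> rw [he] at h1 <;> omega
  -- sorted vectors agree
  have hsort : sortDesc x = sortDesc y := by
    rcases hx.2 y hy.1 with h | h
    · exact h
    · rcases hy.2 x hx.1 with h' | h'
      · exact h'.symm
      · exact absurd h' (fun h'' => decLT_asymm h h'')
  -- constants
  have hn : 0 < n := j.pos
  set c : ℝ := (n : ℝ) + 1 with hc
  have hc2 : 2 ≤ c := by
    have : (1 : ℝ) ≤ (n : ℝ) := by exact_mod_cast hn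
    simp only [hc]; linarith
  set L : ℤ := Finset.univ.inf' ⟨j, Finset.mem_univ j⟩ (fun i => min (x i) (y i)) with hL
  have hLx : ∀ i, L ≤ x i := fun i =>
    (Finset.inf'_le _ (Finset.mem_univ i)).trans (min_le_left _ _)
  have hLy : ∀ i, L ≤ y i := fun i =>
    (Finset.inf'_le _ (Finset.mem_univ i)).trans (min_le_right _ _)
  -- the midpoint
  set m : Fin n → ℝ := fun i => ((x i : ℝ) + (y i : ℝ)) / 2 with hm
  have hmem : m ∈ convexHull ℝ (castVec '' S) := by
    have h1' : castVec x ∈ convexHull ℝ (castVec '' S) :=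
      subset_convexHull ℝ _ ⟨x, hx.1, rfl⟩
    have h2' : castVec y ∈ convexHull ℝ (castVec '' S) :=
      subset_convexHull ℝ _ ⟨y, hy.1, rfl⟩
    have h3' := (convex_convexHull ℝ (castVec '' S)) h1' h2'
      (by norm_num : (0:ℝ) ≤ 1/2) (by norm_num : (0:ℝ) ≤ 1/2) (by norm_num)
    convert h3' using 1
    funext i
    simp only [hm, Pi.add_apply, Pi.smul_apply, smul_eq_mul, castVec]
    ring
  have hmem2 := hS.2 m hmem
  rw [_root_.convexHull_eq] at hmem2
  obtain ⟨ι, t, w, p, hw0, hw1, hp, hcm⟩ := hmem2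
  rw [Finset.centerMass_eq_of_sum_1 _ _ hw1] at hcm
  -- choose integral points
  have hch : ∀ k ∈ t, ∃ ζ : Fin n → ℤ,
      ζ ∈ S ∧ (∀ i, |m i - (ζ i : ℝ)| < 1) ∧ castVec ζ = p k := by
    intro k hk
    obtain ⟨ζ, hζ, hcast⟩ := hp k hk
    exact ⟨ζ, hζ.1, hζ.2, hcast⟩
  choose! ζ hζS hζN hζc using hch
  -- coordinatewise sums
  have hcoord : ∀ i, ∑ k ∈ t, w k * (ζ k i : ℝ) = ((x i : ℝ) + y i) / 2 := by
    intro i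
    have h' := congrFun hcm i
    rw [Finset.sum_apply] at h'
    calc ∑ k ∈ t, w k * (ζ k i : ℝ)
        = ∑ k ∈ t, (w k • p k) i := Finset.sum_congr rfl fun k hk => by
          rw [← hζc k hk]; simp [castVec]
      _ = m i := h'
      _ = ((x i : ℝ) + y i) / 2 := rfl
  -- integral neighborhood conditions
  have hζN' : ∀ k ∈ t, ∀ i, |2 * ζ k i - x i - y i| ≤ 1 := by
    intro k hk i
    have h' := hζN k hk i
    have h2 : |((2 * ζ k i - x i - y i : ℤ) : ℝ)| < 2 := by
      push_cast
      have he : ((2 : ℝ) * ζ k i - x i - y i) = -(2 * (m i - (ζ k i : ℝ))) := by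
        simp only [hm]; ring
      rw [he, abs_neg, abs_mul, abs_two]
      linarith [abs_nonneg (m i - (ζ k i : ℝ))]
    have h3 : |(2 * ζ k i - x i - y i : ℤ)| < 2 := by exact_mod_cast h2
    rw [abs_lt] at h3
    rw [abs_le]
    omega
  -- lower bounds for ζ
  have hζL : ∀ k ∈ t, ∀ i, L ≤ ζ k i := by
    intro k hk i
    have h' := abs_le.mp (hζN' k hk i)
    have := hLx i
    have := hLy i
    omega
  -- Phi values
  have key1 : ∀ k ∈ t, ∑ i, Fw c L (x i) ≤ ∑ i, Fw c L (ζ k i) := fun k hk =>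
    Phi_le c (le_refl c) hc2 L x (ζ k) hLx (hζL k hk) (hx.2 (ζ k) (hζS k hk))
  have hΦxy : ∑ i, Fw c L (x i) = ∑ i, Fw c L (y i) := by
    rw [← sum_sortDesc (Fw c L) x, ← sum_sortDesc (Fw c L) y, hsort]
  have hA : ∑ i, Fw c L (x i) = ∑ k ∈ t, w k * (∑ i, Fw c L (x i)) := by
    rw [← Finset.sum_mul, hw1, one_mul]
  have hB : ∑ k ∈ t, w k * (∑ i, Fw c L (x i)) ≤ ∑ k ∈ t, w k * (∑ i, Fw c L (ζ k i)) :=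
    Finset.sum_le_sum fun k hk => mul_le_mul_of_nonneg_left (key1 k hk) (hw0 k hk)
  have hswap : ∑ k ∈ t, w k * (∑ i, Fw c L (ζ k i)) = ∑ i, ∑ k ∈ t, w k * Fw c L (ζ k i) := by
    simp_rw [Finset.mul_sum]
    exact Finset.sum_comm
  have hC : ∑ i, ∑ k ∈ t, w k * Fw c L (ζ k i)
      < ∑ i : Fin n, (Fw c L (x i) + Fw c L (y i)) / 2 := by
    apply Finset.sum_lt_sum
    · intro i _
      exact coord_le c hc2 L (x i) (y i) (hLx i) (hLy i) t w (fun k => ζ k i) hw1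
        (fun k hk => hζN' k hk i) (hcoord i)
    · exact ⟨j, Finset.mem_univ j,
        coord_lt c hc2 L (x j) (y j) (hLx j) (hLy j) hd t w (fun k => ζ k j) hw1
          (fun k hk => hζN' k hk j) (hcoord j)⟩
  have hD : ∑ i : Fin n, (Fw c L (x i) + Fw c L (y i)) / 2 = ∑ i, Fw c L (x i) := by
    rw [← Finset.sum_div, Finset.sum_add_distrib, ← hΦxy]
    ring
  linarith
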